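/- Let a : Fin n → ℝ^d be a point configuration whose points affinely span ℝ^d, with n > d+2, and let 1 ≤ k ≤ d. Then for all weight vectors w, w' : Fin n → ℝ, the following are equivalent: (i) w and w' induce the same coherent hypersimplicial subdivision at level k+1 of a; (ii) for every x ∈ Fin n, w and w' induce the same coherent hypersimplicial subdivision at level k of the restricted configuration a|_{Fin n \ {x}}. (This says that F^{(k+1)}(A) is normally equivalent to Σ_{x} F^{(k)}(A_{[n]\x}).) -/

import Mathlib

/-- The tile `[X,Y]` (with `X ⊆ Y ⊆ J`) is a `w`-tile of the restricted
configuration `a|_J`. -/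
def IsWTileOn {n d : ℕ} (a : Fin n → (Fin d → ℝ)) (w : Fin n → ℝ)
    (J X Y : Finset (Fin n)) : Prop :=
  ∃ f : (Fin d → ℝ) →ᵃ[ℝ] ℝ,
    (∀ i ∈ X, w i < f (a i)) ∧ (∀ i ∈ Y \ X, f (a i) = w i) ∧
      (∀ i ∈ J \ Y, f (a i) < w i)

/-- `w` and `w'` induce the same coherent hypersimplicial subdivision at level `k`
of the restricted configuration `a|_J`. -/
def SameHypOn {n d : ℕ} (a : Fin n → (Fin d → ℝ)) (w w' : Fin n → ℝ)
    (J : Finset (Fin n)) (k : ℕ) : Prop :=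
  ∀ X Y : Finset (Fin n), X ⊆ Y → Y ⊆ J → X.card < k → k < Y.card →
    (IsWTileOn a w J X Y ↔ IsWTileOn a w' J X Y)

/-- `w` and `w'` induce the same coherent hypersimplicial subdivision at level `k`
of the full configuration `a`. -/
def SameHyp {n d : ℕ} (a : Fin n → (Fin d → ℝ)) (w w' : Fin n → ℝ) (k : ℕ) : Prop :=
  SameHypOn a w w' Finset.univ k

namespace HypAux

open Finset

noncomputable section

variable {n d : ℕ}

/-- coefficient vector for an affine functional -/
abbrev E (d : ℕ) := Fin (d+1) → ℝ

def bval (v : E d) (p : Fin d → ℝ) : ℝ :=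
  (∑ i : Fin d, v i.castSucc * p i) + v (Fin.last d)

lemma bval_add (u v : E d) (p : Fin d → ℝ) : bval (u + v) p = bval u p + bval v p := by
  simp [bval, Finset.sum_add_distrib, add_mul]; ring

lemma bval_smul (c : ℝ) (v : E d) (p : Fin d → ℝ) : bval (c • v) p = c * bval v p := by
  simp [bval, Finset.mul_sum, mul_add, mul_assoc]

lemma bval_zero (p : Fin d → ℝ) : bval (0 : E d) p = 0 := by simp [bval]

lemma bval_neg (v : E d) (p : Fin d → ℝ) : bval (-v) p = - bval v p := by
  simp [bval]; ring

lemma bval_sub (u v : E d) (p : Fin d → ℝ) : bval (u - v) p = bval u p - bval v p := by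
  simp [bval, Finset.sum_sub_distrib, sub_mul]; ring

lemma bval_sum {ι : Type*} (s : Finset ι) (f : ι → E d) (p : Fin d → ℝ) :
    bval (∑ i ∈ s, f i) p = ∑ i ∈ s, bval (f i) p := by
  classical
  induction s using Finset.induction with
  | empty => simp [bval_zero]
  | insert _ _ hx ih => rename_i a s; simp [Finset.sum_insert hx, bval_add, ih]

/-- the constant-one functional -/
def oneE : E d := fun j => if j = Fin.last d then 1 else 0

lemma bval_oneE (p : Fin d → ℝ) : bval (oneE : E d) p = 1 := by
  have : ∀ i : Fin d, (if i.castSucc = Fin.last d then (1:ℝ) else 0) * p i = 0 := by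
    intro i; rw [if_neg (Fin.castSucc_lt_last i).ne]; ring
  simp [bval, oneE, this]

/-- evaluation at a point, as a linear map -/
def evp (p : Fin d → ℝ) : E d →ₗ[ℝ] ℝ where
  toFun v := bval v p
  map_add' u v := bval_add u v p
  map_smul' c v := bval_smul c v p

@[simp] lemma evp_apply (p : Fin d → ℝ) (v : E d) : evp p v = bval v p := rfl

/-- from a coefficient vector to an affine map -/
def toAff (v : E d) : (Fin d → ℝ) →ᵃ[ℝ] ℝ where
  toFun p := bval v p
  linear := ∑ i : Fin d, v i.castSucc • (LinearMap.proj i : (Fin d → ℝ) →ₗ[ℝ] ℝ)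
  map_vadd' p q := by
    simp [bval, LinearMap.sum_apply, Finset.sum_add_distrib, mul_add, add_mul]
    ring

@[simp] lemma toAff_apply (v : E d) (p : Fin d → ℝ) : toAff v p = bval v p := rfl

/-- every affine functional comes from a coefficient vector -/
lemma exists_vec (f : (Fin d → ℝ) →ᵃ[ℝ] ℝ) : ∃ v : E d, ∀ p, bval v p = f p := by
  classical
  refine ⟨Fin.snoc (fun i => f.linear (fun j => if i = j then 1 else 0)) (f 0), fun p => ?_⟩
  have h1 : f p = f.linear p + f 0 := by
    have := f.map_vadd (0 : Fin d → ℝ) p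
    simpa [vadd_eq_add] using this
  have h2 : f.linear p = ∑ i, p i • f.linear (fun j => if i = j then 1 else 0) :=
    LinearMap.pi_apply_eq_sum_univ f.linear p
  simp only [bval, Fin.snoc_castSucc, Fin.snoc_last]
  rw [h1, h2]
  congr 1
  exact Finset.sum_congr rfl fun i _ => by rw [smul_eq_mul]; ring

lemma bval_eq_zero_all (v : E d) (h : ∀ p, bval v p = 0) : v = 0 := by
  classical
  funext j
  refine Fin.lastCases ?_ (fun i => ?_) j
  · have := h 0
    simpa [bval] using this
  · have h0 := h 0
    have h1 := h (fun j' => if i = j' then 1 else 0)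
    simp [bval] at h0 h1
    show v i.castSucc = 0
    linarith

lemma vanish (a : Fin n → Fin d → ℝ) (hspan : affineSpan ℝ (Set.range a) = ⊤)
    (v : E d) (hv : ∀ i, bval v (a i) = 0) : v = 0 := by
  apply bval_eq_zero_all
  intro p
  have hp : p ∈ affineSpan ℝ (Set.range a) := hspan ▸ AffineSubspace.mem_top ℝ _ p
  refine affineSpan_induction (p := fun q => bval v q = 0) hp ?_ ?_
  · rintro x ⟨i, rfl⟩; exact hv i
  · intro c u u' u'' pu pu' pu''
    have : bval v (c • (u -ᵥ u') +ᵥ u'') = c * (bval v u - bval v u') + bval v u'' := by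
      have := (toAff v).map_vadd u'' (c • (u -ᵥ u'))
      rw [toAff_apply] at this
      rw [this]
      have hl : (toAff v).linear (c • (u -ᵥ u')) = c • ((toAff v).linear (u -ᵥ u')) :=
        map_smul _ _ _
      rw [hl, AffineMap.linearMap_vsub]
      simp only [toAff_apply, smul_eq_mul, vadd_eq_add, vsub_eq_sub]
      try ring
    rw [this, pu, pu', pu'']; ring

/-- the points indexed by `S` affinely span (expressed dually) -/
def Reg (a : Fin n → Fin d → ℝ) (S : Finset (Fin n)) : Prop :=
  ∀ v : E d, (∀ i ∈ S, bval v (a i) = 0) → v = 0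

lemma reg_mono {a : Fin n → Fin d → ℝ} {S T : Finset (Fin n)} (hST : S ⊆ T)
    (h : Reg a S) : Reg a T := fun v hv => h v fun i hi => hv i (hST hi)

lemma reg_uniq {a : Fin n → Fin d → ℝ} {S : Finset (Fin n)} (h : Reg a S)
    {u u' : E d} (huu : ∀ i ∈ S, bval u (a i) = bval u' (a i)) : u = u' := by
  have := h (u - u') (fun i hi => by rw [bval_sub, huu i hi, sub_self])
  exact sub_eq_zero.mp this

def evS (a : Fin n → Fin d → ℝ) (S : Finset (Fin n)) : E d →ₗ[ℝ] (S → ℝ) :=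
  LinearMap.pi (fun i : S => evp (a i))

lemma evS_inj {a : Fin n → Fin d → ℝ} {S : Finset (Fin n)} (h : Reg a S) :
    Function.Injective (evS a S) := by
  rw [← LinearMap.ker_eq_bot]
  rw [LinearMap.ker_eq_bot']
  intro v hv
  apply h
  intro i hi
  have := congrFun hv ⟨i, hi⟩
  simpa [evS, LinearMap.pi_apply] using this

lemma finrank_E : Module.finrank ℝ (E d) = d + 1 := by
  simp [Module.finrank_pi]

lemma reg_card {a : Fin n → Fin d → ℝ} {S : Finset (Fin n)} (h : Reg a S) :
    d + 1 ≤ S.card := by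
  have := LinearMap.finrank_le_finrank_of_injective (evS_inj h)
  rwa [finrank_E, Module.finrank_pi, Fintype.card_coe] at this

lemma reg_surj {a : Fin n → Fin d → ℝ} {S : Finset (Fin n)} (h : Reg a S)
    (hcard : S.card = d + 1) (u : Fin n → ℝ) :
    ∃ v : E d, ∀ i ∈ S, bval v (a i) = u i := by
  have hfr : Module.finrank ℝ (E d) = Module.finrank ℝ (S → ℝ) := by
    rw [finrank_E, Module.finrank_pi, Fintype.card_coe, hcard]
  have hsurj : Function.Surjective (evS a S) :=
    (LinearMap.injective_iff_surjective_of_finrank_eq_finrank hfr).mp (evS_inj h)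
  obtain ⟨v, hv⟩ := hsurj (fun i : S => u i)
  refine ⟨v, fun i hi => ?_⟩
  have := congrFun hv ⟨i, hi⟩
  simpa [evS, LinearMap.pi_apply] using this

lemma reg_erase {a : Fin n → Fin d → ℝ} {S : Finset (Fin n)} (h : Reg a S)
    (hcard : d + 2 ≤ S.card) : ∃ x ∈ S, Reg a (S.erase x) := by
  classical
  by_contra hc
  push_neg at hc
  have hex : ∀ x : S, ∃ v : E d, (∀ i ∈ S.erase x.1, bval v (a i) = 0) ∧ v ≠ 0 := by
    rintro ⟨x, hx⟩
    have := hc x hx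
    unfold Reg at this
    push_neg at this
    obtain ⟨v, hv1, hv2⟩ := this
    exact ⟨v, hv1, hv2⟩
  choose hvec hprop hne using hex
  have hli : LinearIndependent ℝ hvec := by
    by_contra hnli
    obtain ⟨g, hg0, x, hgx⟩ := Fintype.not_linearIndependent_iff.mp hnli
    have heval : ∀ y : S, bval (∑ z : S, g z • hvec z) (a y) =
        g y * bval (hvec y) (a y) := by
      intro y
      rw [bval_sum]
      rw [Finset.sum_eq_single y]
      · rw [bval_smul]
      · intro z _ hzy
        rw [bval_smul, hprop z y.1 (Finset.mem_erase.mpr ⟨fun hh => hzy (Subtype.ext hh.symm), y.2⟩), mul_zero]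
      · simp
    have hx0 : bval (hvec x) (a x.1) ≠ 0 := by
      intro hz
      apply hne x
      apply h
      intro i hi
      by_cases hix : i = x.1
      · subst hix; exact hz
      · exact hprop x i (Finset.mem_erase.mpr ⟨hix, hi⟩)
    have := heval x
    rw [hg0, bval_zero] at this
    exact hgx (by
      rcases mul_eq_zero.mp this.symm with h1 | h2
      · exact h1
      · exact absurd h2 hx0)
  have := LinearIndependent.fintype_card_le_finrank hli
  rw [Fintype.card_coe, finrank_E] at this
  omega

lemma bval_move (v h : E d) (t : ℝ) (p : Fin d → ℝ) :
    bval (v + t • h) p = bval v p + t * bval h p := by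
  rw [bval_add, bval_smul]

def Rz (a : Fin n → Fin d → ℝ) (w : Fin n → ℝ) (v : E d) (P Z M : Finset (Fin n)) : Prop :=
  (∀ i ∈ P, w i < bval v (a i)) ∧ (∀ i ∈ Z, bval v (a i) = w i) ∧
    (∀ i ∈ M, bval v (a i) < w i)

lemma cross {a : Fin n → Fin d → ℝ} {w : Fin n → ℝ} {v h : E d}
    {P Z M K : Finset (Fin n)}
    (hrz : Rz a w v P Z M)
    (hZ : ∀ i ∈ Z, bval h (a i) = 0)
    (hKmem : ∀ i ∈ K, (i ∈ P ∧ bval h (a i) < 0) ∨ (i ∈ M ∧ 0 < bval h (a i)))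
    (hPK : ∀ i ∈ P, i ∉ K → 0 ≤ bval h (a i))
    (hMK : ∀ i ∈ M, i ∉ K → bval h (a i) ≤ 0)
    (hK : K.Nonempty) :
    ∃ (C : Finset (Fin n)) (t : ℝ), 0 < t ∧ C ⊆ K ∧ C.Nonempty ∧
      Rz a w (v + t • h) (P \ C) (Z ∪ C) (M \ C) := by
  classical
  obtain ⟨hP, hZv, hM⟩ := hrz
  set r : Fin n → ℝ := fun i => (w i - bval v (a i)) / bval h (a i) with hr
  have rpos : ∀ i ∈ K, 0 < r i := by
    intro i hi
    rcases hKmem i hi with ⟨hiP, hh⟩ | ⟨hiM, hh⟩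
    · exact div_pos_of_neg_of_neg (by linarith [hP i hiP]) hh
    · exact div_pos (by linarith [hM i hiM]) hh
  obtain ⟨i0, hi0K, hmin⟩ := K.exists_min_image r hK
  set t := r i0 with ht
  have htpos : 0 < t := rpos i0 hi0K
  set C := K.filter (fun i => r i = t) with hC
  have hCK : C ⊆ K := Finset.filter_subset _ _
  have hCne : C.Nonempty := ⟨i0, Finset.mem_filter.mpr ⟨hi0K, rfl⟩⟩
  have keyC : ∀ i ∈ C, bval (v + t • h) (a i) = w i := by
    intro i hi
    obtain ⟨hiK, hri⟩ := Finset.mem_filter.mp hi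
    have hne : bval h (a i) ≠ 0 := by
      rcases hKmem i hiK with ⟨_, hh⟩ | ⟨_, hh⟩ <;> [exact ne_of_lt hh; exact (ne_of_gt hh)]
    rw [bval_move, ← hri, hr]
    field_simp
    ring
  refine ⟨C, t, htpos, hCK, hCne, ?_, ?_, ?_⟩
  · intro i hi
    obtain ⟨hiP, hiC⟩ := Finset.mem_sdiff.mp hi
    rw [bval_move]
    by_cases hiK : i ∈ K
    · rcases hKmem i hiK with ⟨_, hh⟩ | ⟨hiM, _⟩
      · have hlt : t < r i := by
          rcases lt_or_eq_of_le (hmin i hiK) with h' | h'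
          · exact h'
          · exact absurd h'.symm (fun he => hiC (Finset.mem_filter.mpr ⟨hiK, he⟩))
        have : r i * bval h (a i) = w i - bval v (a i) :=
          div_mul_cancel₀ _ (ne_of_lt hh)
        nlinarith
      · exact absurd (hM i hiM) (not_lt.mpr (le_of_lt (hP i hiP)))
    · have := hPK i hiP hiK
      nlinarith [hP i hiP]
  · intro i hi
    rcases Finset.mem_union.mp hi with hiZ | hiC
    · rw [bval_move, hZ i hiZ, hZv i hiZ]; ring
    · exact keyC i hiC
  · intro i hi
    obtain ⟨hiM, hiC⟩ := Finset.mem_sdiff.mp hi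
    rw [bval_move]
    by_cases hiK : i ∈ K
    · rcases hKmem i hiK with ⟨hiP, _⟩ | ⟨_, hh⟩
      · exact absurd (hM i hiM) (not_lt.mpr (le_of_lt (hP i hiP)))
      · have hlt : t < r i := by
          rcases lt_or_eq_of_le (hmin i hiK) with h' | h'
          · exact h'
          · exact absurd h'.symm (fun he => hiC (Finset.mem_filter.mpr ⟨hiK, he⟩))
        have : r i * bval h (a i) = w i - bval v (a i) :=
          div_mul_cancel₀ _ (ne_of_gt hh)
        nlinarith
    · have := hMK i hiM hiK
      nlinarith [hM i hiM]

lemma pert {a : Fin n → Fin d → ℝ} {w : Fin n → ℝ} {v h : E d}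
    {P Z M Cp Cm : Finset (Fin n)}
    (hP : ∀ i ∈ P, w i < bval v (a i)) (hM : ∀ i ∈ M, bval v (a i) < w i)
    (hZ : ∀ i ∈ Z, bval v (a i) = w i) (hZh : ∀ i ∈ Z, bval h (a i) = 0)
    (hCp : ∀ i ∈ Cp, bval v (a i) = w i ∧ 0 < bval h (a i))
    (hCm : ∀ i ∈ Cm, bval v (a i) = w i ∧ bval h (a i) < 0) :
    ∃ t : ℝ, 0 < t ∧ Rz a w (v + t • h) (P ∪ Cp) Z (M ∪ Cm) := by
  classical
  set r : Fin n → ℝ := fun i => (w i - bval v (a i)) / bval h (a i) with hr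
  set B := (P.filter (fun i => bval h (a i) < 0)) ∪ (M.filter (fun i => 0 < bval h (a i)))
    with hB
  have rposB : ∀ i ∈ B, 0 < r i := by
    intro i hi
    rcases Finset.mem_union.mp hi with h' | h' <;> obtain ⟨hi2, hh⟩ := Finset.mem_filter.mp h'
    · exact div_pos_of_neg_of_neg (by linarith [hP i hi2]) hh
    · exact div_pos (by linarith [hM i hi2]) hh
  have main : ∀ t : ℝ, 0 < t → (∀ i ∈ B, t < r i) →
      Rz a w (v + t • h) (P ∪ Cp) Z (M ∪ Cm) := by
    intro t htpos htB
    refine ⟨?_, ?_, ?_⟩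
    · intro i hi
      rw [bval_move]
      rcases Finset.mem_union.mp hi with hiP | hiCp
      · by_cases hneg : bval h (a i) < 0
        · have hiB : i ∈ B := Finset.mem_union_left _ (Finset.mem_filter.mpr ⟨hiP, hneg⟩)
          have hlt := htB i hiB
          have : r i * bval h (a i) = w i - bval v (a i) :=
            div_mul_cancel₀ _ (ne_of_lt hneg)
          nlinarith
        · push_neg at hneg
          nlinarith [hP i hiP]
      · obtain ⟨he, hh⟩ := hCp i hiCp
        nlinarith
    · intro i hi
      rw [bval_move, hZ i hi, hZh i hi]; ring
    · intro i hi
      rw [bval_move]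
      rcases Finset.mem_union.mp hi with hiM | hiCm
      · by_cases hposh : 0 < bval h (a i)
        · have hiB : i ∈ B := Finset.mem_union_right _ (Finset.mem_filter.mpr ⟨hiM, hposh⟩)
          have hlt := htB i hiB
          have : r i * bval h (a i) = w i - bval v (a i) :=
            div_mul_cancel₀ _ (ne_of_gt hposh)
          nlinarith
        · push_neg at hposh
          nlinarith [hM i hiM]
      · obtain ⟨he, hh⟩ := hCm i hiCm
        nlinarith
  by_cases hBne : B.Nonempty
  · obtain ⟨i0, hi0, hmin⟩ := B.exists_min_image r hBne
    refine ⟨r i0 / 2, by linarith [rposB i0 hi0], main _ (by linarith [rposB i0 hi0]) ?_⟩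
    intro i hi
    have h1 := hmin i hi
    have h2 := rposB i0 hi0
    linarith
  · refine ⟨1, one_pos, main 1 one_pos ?_⟩
    intro i hi
    exact absurd ⟨i, hi⟩ hBne

/-- bridge between the affine-map form and the coefficient-vector form -/
lemma isWTileOn_iff (a : Fin n → Fin d → ℝ) (w : Fin n → ℝ) (J X Y : Finset (Fin n)) :
    IsWTileOn a w J X Y ↔ ∃ v : E d, Rz a w v X (Y \ X) (J \ Y) := by
  constructor
  · rintro ⟨f, h1, h2, h3⟩
    obtain ⟨v, hv⟩ := exists_vec f
    exact ⟨v, fun i hi => (hv (a i)).symm ▸ h1 i hi, fun i hi => (hv (a i)).symm ▸ h2 i hi,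
      fun i hi => (hv (a i)).symm ▸ h3 i hi⟩
  · rintro ⟨v, h1, h2, h3⟩
    exact ⟨toAff v, fun i hi => h1 i hi, fun i hi => h2 i hi, fun i hi => h3 i hi⟩

lemma forward_hard (a : Fin n → Fin d → ℝ)
    (hspan : affineSpan ℝ (Set.range a) = ⊤)
    (k : ℕ) (hk1 : 1 ≤ k) (hk2 : k ≤ d) (w w' : Fin n → ℝ)
    (H : ∀ X Y : Finset (Fin n), X ⊆ Y → X.card < k+1 → k+1 < Y.card →
        ((∃ v : E d, Rz a w v X (Y\X) (univ\Y)) ↔ (∃ v : E d, Rz a w' v X (Y\X) (univ\Y))))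
    (x : Fin n) :
    ∀ m : ℕ, ∀ X Y : Finset (Fin n), X.card = m → X ⊆ Y → Y ⊆ {x}ᶜ → X.card < k →
      Y.card = k+1 → (∃ v : E d, Rz a w v X (Y\X) (univ\Y)) →
      (∃ v : E d, Rz a w' v X (Y\X) ({x}ᶜ\Y)) := by
  classical
  intro m
  induction m using Nat.strong_induction_on with
  | _ m IH =>
  intro X Y hXm hXY hYx hXk hYc hreal
  obtain ⟨v, hvP, hvZ, hvM⟩ := hreal
  have hxY : x ∉ Y := fun hxy => by simpa using hYx hxy
  by_cases hU : ∃ h : E d, (∀ i ∈ Y \ X, bval h (a i) = 0) ∧ h ≠ 0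
  · -- climb case
    obtain ⟨h0, hz00, hne0⟩ := hU
    set Kof : E d → Finset (Fin n) := fun h =>
      (X.filter (fun i => bval h (a i) < 0)) ∪
        ((univ \ Y).filter (fun i => 0 < bval h (a i))) with hKof
    have step : ∀ h : E d, (∀ i ∈ Y \ X, bval h (a i) = 0) → (Kof h).Nonempty →
        ∃ u : E d, Rz a w' u X (Y\X) ({x}ᶜ\Y) := by
      intro h hz0 hKne
      have hKmem : ∀ i ∈ Kof h, (i ∈ X ∧ bval h (a i) < 0) ∨
          (i ∈ univ \ Y ∧ 0 < bval h (a i)) := by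
        intro i hi
        rcases Finset.mem_union.mp hi with h' | h' <;>
          obtain ⟨h1, h2⟩ := Finset.mem_filter.mp h'
        · exact Or.inl ⟨h1, h2⟩
        · exact Or.inr ⟨h1, h2⟩
      have hPK : ∀ i ∈ X, i ∉ Kof h → 0 ≤ bval h (a i) := by
        intro i hi hiK
        by_contra hcon
        push_neg at hcon
        exact hiK (Finset.mem_union_left _ (Finset.mem_filter.mpr ⟨hi, hcon⟩))
      have hMK : ∀ i ∈ univ \ Y, i ∉ Kof h → bval h (a i) ≤ 0 := by
        intro i hi hiK
        by_contra hcon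
        push_neg at hcon
        exact hiK (Finset.mem_union_right _ (Finset.mem_filter.mpr ⟨hi, hcon⟩))
      obtain ⟨C, t, htp, hCK, hCne, hrz2⟩ :=
        cross ⟨hvP, hvZ, hvM⟩ hz0 hKmem hPK hMK hKne
      have hCneg : ∀ i ∈ C, i ∈ X → bval h (a i) < 0 := by
        intro i hi hiX
        rcases hKmem i (hCK hi) with ⟨_, hh⟩ | ⟨hiM, _⟩
        · exact hh
        · exact absurd (hXY hiX) (Finset.mem_sdiff.mp hiM).2
      have hCpos : ∀ i ∈ C, i ∉ X → 0 < bval h (a i) := by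
        intro i hi hiX
        rcases hKmem i (hCK hi) with ⟨hiX', _⟩ | ⟨_, hh⟩
        · exact absurd hiX' hiX
        · exact hh
      have hCnotY : ∀ i ∈ C, i ∉ X → i ∉ Y := by
        intro i hi hiX
        rcases hKmem i (hCK hi) with ⟨hiX', _⟩ | ⟨hiM, _⟩
        · exact absurd hiX' hiX
        · exact (Finset.mem_sdiff.mp hiM).2
      have hzneg : ∀ i ∈ Y \ X, bval (-h) (a i) = 0 := fun i hi => by
        rw [bval_neg, hz0 i hi, neg_zero]
      by_cases hCm : (C \ X).Nonempty
      · -- some up-crossers : go to a covering tile and transfer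
        set X' := X \ C with hX'
        set Y' := Y ∪ C with hY'
        have idZ' : Y' \ X' = (Y \ X) ∪ C := by
          ext q
          simp only [hY', hX', Finset.mem_sdiff, Finset.mem_union, not_and, not_not]
          constructor
          · rintro ⟨hq1 | hq1, hq2⟩
            · by_cases hqC : q ∈ C
              · exact Or.inr hqC
              · rcases Classical.em (q ∈ X) with hqX | hqX
                · exact Or.inr (hq2 hqX)
                · exact Or.inl ⟨hq1, hqX⟩
            · exact Or.inr hq1
          · rintro (⟨hq1, hq2⟩ | hq1)
            · exact ⟨Or.inl hq1, fun hqX => absurd hqX hq2⟩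
            · exact ⟨Or.inr hq1, fun _ => hq1⟩
        have idM' : univ \ Y' = (univ \ Y) \ C := by
          ext q
          simp only [hY', Finset.mem_sdiff, Finset.mem_union, Finset.mem_univ, true_and, not_or]
          try tauto
        have hreal' : ∃ u : E d, Rz a w u X' (Y' \ X') (univ \ Y') := by
          refine ⟨v + t • h, ?_⟩
          rw [idZ', idM']
          exact hrz2
        have hsub' : X' ⊆ Y' := fun q hq =>
          Finset.mem_union_left _ (hXY (Finset.mem_sdiff.mp hq).1)
        have hc1 : X'.card < k + 1 := by
          have := Finset.card_le_card (show X' ⊆ X from Finset.sdiff_subset)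
          omega
        have hc2 : k + 1 < Y'.card := by
          have hdisj : Disjoint Y (C \ X) := by
            rw [Finset.disjoint_right]
            intro q hq
            exact hCnotY q (Finset.mem_sdiff.mp hq).1 (Finset.mem_sdiff.mp hq).2
          have hsubu : Y ∪ (C \ X) ⊆ Y' := by
            apply Finset.union_subset Finset.subset_union_left
            exact (Finset.sdiff_subset).trans Finset.subset_union_right
          have h1 := Finset.card_le_card hsubu
          rw [Finset.card_union_of_disjoint hdisj] at h1
          have h2 := Finset.Nonempty.card_pos hCm
          omega
        obtain ⟨g, hgP, hgZ, hgM⟩ := (H X' Y' hsub' hc1 hc2).mp hreal'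
        rw [idZ'] at hgZ
        rw [idM'] at hgM
        obtain ⟨t', ht', hgP2, hgZ2, hgM2⟩ :=
          pert (h := -h) hgP hgM
            (fun i hi => hgZ i (Finset.mem_union_left _ hi)) hzneg
            (Cp := C ∩ X)
            (fun i hi => by
              obtain ⟨hiC, hiX⟩ := Finset.mem_inter.mp hi
              refine ⟨hgZ i (Finset.mem_union_right _ hiC), ?_⟩
              rw [bval_neg]
              linarith [hCneg i hiC hiX])
            (Cm := C \ X)
            (fun i hi => by
              obtain ⟨hiC, hiX⟩ := Finset.mem_sdiff.mp hi
              refine ⟨hgZ i (Finset.mem_union_right _ hiC), ?_⟩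
              rw [bval_neg]
              linarith [hCpos i hiC hiX])
        refine ⟨g + t' • (-h), ?_, hgZ2, ?_⟩
        · intro q hq
          apply hgP2
          by_cases hqC : q ∈ C
          · exact Finset.mem_union_right _ (Finset.mem_inter.mpr ⟨hqC, hq⟩)
          · exact Finset.mem_union_left _ (Finset.mem_sdiff.mpr ⟨hq, hqC⟩)
        · intro q hq
          apply hgM2
          obtain ⟨hq1, hq2⟩ := Finset.mem_sdiff.mp hq
          by_cases hqC : q ∈ C
          · exact Finset.mem_union_right _
              (Finset.mem_sdiff.mpr ⟨hqC, fun hqX => hq2 (hXY hqX)⟩)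
          · exact Finset.mem_union_left _
              (Finset.mem_sdiff.mpr ⟨Finset.mem_sdiff.mpr ⟨Finset.mem_univ _, hq2⟩, hqC⟩)
      · -- only down-crossers : recurse on smaller X
        have hCsubX : C ⊆ X := by
          intro i hi
          by_contra hix
          exact hCm ⟨i, Finset.mem_sdiff.mpr ⟨hi, hix⟩⟩
        set X'' := X \ C with hX''
        have idZ'' : Y \ X'' = (Y \ X) ∪ C := by
          ext q
          simp only [hX'', Finset.mem_sdiff, Finset.mem_union, not_and, not_not]
          constructor
          · rintro ⟨hq1, hq2⟩
            by_cases hqX : q ∈ X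
            · exact Or.inr (hq2 hqX)
            · exact Or.inl ⟨hq1, hqX⟩
          · rintro (⟨hq1, hq2⟩ | hq1)
            · exact ⟨hq1, fun hqX => absurd hqX hq2⟩
            · exact ⟨hXY (hCsubX hq1), fun _ => hq1⟩
        have idM'' : (univ \ Y) \ C = univ \ Y := by
          apply Finset.sdiff_eq_self_of_disjoint
          rw [Finset.disjoint_left]
          intro q hq
          exact fun hqC => (Finset.mem_sdiff.mp hq).2 (hXY (hCsubX hqC))
        have hreal'' : ∃ u : E d, Rz a w u X'' (Y \ X'') (univ \ Y) := by
          refine ⟨v + t • h, hrz2.1, ?_, ?_⟩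
          · rw [idZ'']; exact hrz2.2.1
          · rw [← idM'']; exact hrz2.2.2
        have hlt : X''.card < m := by
          have h1 : X''.card = X.card - C.card := Finset.card_sdiff_of_subset hCsubX
          have h2 := Finset.Nonempty.card_pos hCne
          have h3 := Finset.card_le_card hCsubX
          omega
        have hXk'' : X''.card < k := by
          have := Finset.card_le_card (show X'' ⊆ X from Finset.sdiff_subset)
          omega
        obtain ⟨g, hgP, hgZ, hgM⟩ := IH X''.card hlt X'' Y rfl
          ((Finset.sdiff_subset).trans hXY) hYx hXk'' hYc hreal''
        rw [idZ''] at hgZ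
        obtain ⟨t', ht', hgP2, hgZ2, hgM2⟩ :=
          pert (h := -h) hgP hgM
            (fun i hi => hgZ i (Finset.mem_union_left _ hi)) hzneg
            (Cp := C)
            (fun i hi => by
              refine ⟨hgZ i (Finset.mem_union_right _ hi), ?_⟩
              rw [bval_neg]
              linarith [hCneg i hi (hCsubX hi)])
            (Cm := ∅)
            (fun i hi => absurd hi (Finset.notMem_empty i))
        refine ⟨g + t' • (-h), ?_, hgZ2, ?_⟩
        · intro q hq
          apply hgP2
          by_cases hqC : q ∈ C
          · exact Finset.mem_union_right _ hqC
          · exact Finset.mem_union_left _ (Finset.mem_sdiff.mpr ⟨hq, hqC⟩)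
        · intro q hq
          exact hgM2 q (Finset.mem_union_left _ hq)
    by_cases hK0 : (Kof h0).Nonempty
    · exact step h0 hz00 hK0
    · by_cases hK0' : (Kof (-h0)).Nonempty
      · exact step (-h0) (fun i hi => by rw [bval_neg, hz00 i hi, neg_zero]) hK0'
      · exfalso
        apply hne0
        apply vanish a hspan
        intro i
        have hnotmem : ∀ hh : E d, ¬(Kof hh).Nonempty → i ∉ Kof hh :=
          fun hh hne hmem => hne ⟨i, hmem⟩
        by_cases hiX : i ∈ X
        · have h1 : ¬ bval h0 (a i) < 0 := fun hc => (hnotmem h0 hK0)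
            (Finset.mem_union_left _ (Finset.mem_filter.mpr ⟨hiX, hc⟩))
          have h2 : ¬ bval (-h0) (a i) < 0 := fun hc => (hnotmem (-h0) hK0')
            (Finset.mem_union_left _ (Finset.mem_filter.mpr ⟨hiX, hc⟩))
          rw [bval_neg] at h2
          push_neg at h1 h2
          linarith
        · by_cases hiY : i ∈ Y
          · exact hz00 i (Finset.mem_sdiff.mpr ⟨hiY, hiX⟩)
          · have hiM : i ∈ univ \ Y := Finset.mem_sdiff.mpr ⟨Finset.mem_univ _, hiY⟩
            have h1 : ¬ 0 < bval h0 (a i) := fun hc => (hnotmem h0 hK0)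
              (Finset.mem_union_right _ (Finset.mem_filter.mpr ⟨hiM, hc⟩))
            have h2 : ¬ 0 < bval (-h0) (a i) := fun hc => (hnotmem (-h0) hK0')
              (Finset.mem_union_right _ (Finset.mem_filter.mpr ⟨hiM, hc⟩))
            rw [bval_neg] at h2
            push_neg at h1 h2
            linarith
  · -- terminal case : Y spans and X = ∅
    push_neg at hU
    have hreg : Reg a (Y \ X) := by
      intro u hu
      by_contra hne
      exact hne (hU u hu)
    have hcard1 : d + 1 ≤ (Y \ X).card := reg_card hreg
    have hcards : (Y \ X).card = Y.card - X.card := Finset.card_sdiff_of_subset hXY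
    have hXle := Finset.card_le_card hXY
    have hX0 : X.card = 0 := by omega
    have hkd : k = d := by omega
    have hXempty : X = ∅ := Finset.card_eq_zero.mp hX0
    subst hXempty
    rw [Finset.sdiff_empty] at hreg hvZ ⊢
    have hYcard : Y.card = d + 1 := by omega
    have hlam : ∀ i : Fin n, ∃ li : E d, ∀ j ∈ Y,
        bval li (a j) = (fun q => if q = i then (1:ℝ) else 0) j :=
      fun i => reg_surj hreg hYcard _
    choose lam hlam using hlam
    have hsumone : ∀ p, ∑ i ∈ Y, bval (lam i) p = 1 := by
      have hs : (∑ i ∈ Y, lam i) = oneE := by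
        apply reg_uniq hreg
        intro j hj
        rw [bval_sum, bval_oneE]
        rw [Finset.sum_congr rfl (fun i hi => hlam i j hj)]
        simp [Finset.sum_ite_eq Y j (fun _ => (1:ℝ)), hj]
      intro p
      rw [← bval_sum, hs, bval_oneE]
    obtain ⟨g, hg⟩ := reg_surj hreg hYcard w'
    refine ⟨g, fun q hq => absurd hq (Finset.notMem_empty q), hg, ?_⟩
    intro j hj
    obtain ⟨hjx, hjY⟩ := Finset.mem_sdiff.mp hj
    have hex : ∃ i ∈ Y, 0 < bval (lam i) (a j) := by
      by_contra hcon
      push_neg at hcon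
      have := Finset.sum_nonpos (s := Y) (f := fun i => bval (lam i) (a j)) hcon
      rw [hsumone (a j)] at this
      linarith
    obtain ⟨i, hiY, hipos⟩ := hex
    have hiC' : ∀ q ∈ Y.erase i, bval (lam i) (a q) = 0 := by
      intro q hq
      obtain ⟨hqi, hqY⟩ := Finset.mem_erase.mp hq
      rw [hlam i q hqY]
      simp [hqi]
    have hrz0 : Rz a w v ∅ (Y.erase i) (univ \ Y) :=
      ⟨fun q hq => absurd hq (Finset.notMem_empty q),
        fun q hq => hvZ q (Finset.mem_of_mem_erase hq), hvM⟩
    set K := (univ \ Y).filter (fun q => 0 < bval (lam i) (a q)) with hKdef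
    obtain ⟨C, t, htp, hCK, hCne, hrz2⟩ :=
      cross hrz0 hiC'
        (K := K)
        (fun q hq => Or.inr ⟨(Finset.mem_filter.mp hq).1, (Finset.mem_filter.mp hq).2⟩)
        (fun q hq _ => absurd hq (Finset.notMem_empty q))
        (fun q hq hqK => by
          by_contra hcon
          push_neg at hcon
          exact hqK (Finset.mem_filter.mpr ⟨hq, hcon⟩))
        ⟨j, Finset.mem_filter.mpr ⟨Finset.mem_sdiff.mpr ⟨Finset.mem_univ _, hjY⟩, hipos⟩⟩
    have hCsub : C ⊆ univ \ Y := fun q hq => (Finset.mem_filter.mp (hCK hq)).1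
    have hCpos : ∀ q ∈ C, 0 < bval (lam i) (a q) :=
      fun q hq => (Finset.mem_filter.mp (hCK hq)).2
    have hiC : i ∉ C := fun hic => (Finset.mem_sdiff.mp (hCsub hic)).2 hiY
    set Y₁ := Y ∪ C with hY₁
    have idZ₁ : Y₁ \ {i} = (Y.erase i) ∪ C := by
      ext q
      simp only [hY₁, Finset.mem_sdiff, Finset.mem_union, Finset.mem_singleton,
        Finset.mem_erase]
      constructor
      · rintro ⟨hq1 | hq1, hq2⟩
        · exact Or.inl ⟨hq2, hq1⟩
        · exact Or.inr hq1
      · rintro (⟨hq1, hq2⟩ | hq1)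
        · exact ⟨Or.inl hq2, hq1⟩
        · exact ⟨Or.inr hq1, fun he => hiC (he ▸ hq1)⟩
    have idM₁ : univ \ Y₁ = (univ \ Y) \ C := by
      ext q
      simp only [hY₁, Finset.mem_sdiff, Finset.mem_union, Finset.mem_univ, true_and, not_or]
      try tauto
    have hreal₁ : ∃ u : E d, Rz a w u {i} (Y₁ \ {i}) (univ \ Y₁) := by
      refine ⟨v + t • lam i, ?_, ?_, ?_⟩
      · intro q hq
        rw [Finset.mem_singleton] at hq
        subst hq
        rw [bval_move, hvZ q hiY]
        have e1 : bval (lam q) (a q) = 1 := by rw [hlam q q hiY]; simp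
        rw [e1]
        linarith
      · rw [idZ₁]; exact hrz2.2.1
      · rw [idM₁]; exact hrz2.2.2
    have hsub₁ : {i} ⊆ Y₁ := Finset.singleton_subset_iff.mpr (Finset.mem_union_left _ hiY)
    have hc1 : ({i} : Finset (Fin n)).card < k + 1 := by
      rw [Finset.card_singleton]; omega
    have hc2 : k + 1 < Y₁.card := by
      have hdisj : Disjoint Y C := by
        rw [Finset.disjoint_right]
        exact fun q hq => (Finset.mem_sdiff.mp (hCsub hq)).2
      rw [hY₁, Finset.card_union_of_disjoint hdisj]
      have := Finset.Nonempty.card_pos hCne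
      omega
    obtain ⟨g₁, hg₁P, hg₁Z, hg₁M⟩ := (H {i} Y₁ hsub₁ hc1 hc2).mp hreal₁
    rw [idZ₁] at hg₁Z
    rw [idM₁] at hg₁M
    set s' := bval g₁ (a i) - w' i with hs'def
    have hs' : 0 < s' := by
      have := hg₁P i (Finset.mem_singleton_self i)
      rw [hs'def]; linarith
    have heqg : g₁ = g + s' • lam i := by
      apply reg_uniq hreg
      intro q hq
      rw [bval_move, hg q hq]
      by_cases hqi : q = i
      · subst hqi
        have e1 : bval (lam q) (a q) = 1 := by rw [hlam q q hq]; simp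
        rw [e1, hs'def]
        ring
      · have e0 : bval (lam i) (a q) = 0 := by rw [hlam i q hq]; simp [hqi]
        rw [e0, hg₁Z q (Finset.mem_union_left _ (Finset.mem_erase.mpr ⟨hqi, hq⟩))]
        ring
    have hgj : bval g₁ (a j) = bval g (a j) + s' * bval (lam i) (a j) := by
      rw [heqg, bval_move]
    by_cases hjC : j ∈ C
    · have hz := hg₁Z j (Finset.mem_union_right _ hjC)
      have hp := mul_pos hs' (hCpos j hjC)
      linarith [hgj]
    · have hm := hg₁M j (Finset.mem_sdiff.mpr
        ⟨Finset.mem_sdiff.mpr ⟨Finset.mem_univ _, hjY⟩, hjC⟩)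
      have hp := mul_pos hs' hipos
      linarith [hgj]


lemma forward_one (a : Fin n → Fin d → ℝ)
    (hspan : affineSpan ℝ (Set.range a) = ⊤)
    (k : ℕ) (hk1 : 1 ≤ k) (hk2 : k ≤ d) (w w' : Fin n → ℝ)
    (H : ∀ X Y : Finset (Fin n), X ⊆ Y → X.card < k+1 → k+1 < Y.card →
        ((∃ v : E d, Rz a w v X (Y\X) (univ\Y)) ↔ (∃ v : E d, Rz a w' v X (Y\X) (univ\Y))))
    (x : Fin n) (X Y : Finset (Fin n)) (hXY : X ⊆ Y) (hYx : Y ⊆ {x}ᶜ)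
    (h1 : X.card < k) (h2 : k < Y.card) :
    (∃ v : E d, Rz a w v X (Y\X) ({x}ᶜ\Y)) → (∃ v : E d, Rz a w' v X (Y\X) ({x}ᶜ\Y)) := by
  classical
  rintro ⟨v, hvP, hvZ, hvM⟩
  have hxY : x ∉ Y := fun hxy => by simpa using hYx hxy
  have hxX : x ∉ X := fun h => hxY (hXY h)
  have idM : univ \ insert x Y = {x}ᶜ \ Y := by
    ext q
    constructor
    · intro hq
      obtain ⟨-, hq2⟩ := Finset.mem_sdiff.mp hq
      rw [Finset.mem_insert, not_or] at hq2
      exact Finset.mem_sdiff.mpr ⟨Finset.mem_compl.mpr (by simpa using hq2.1), hq2.2⟩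
    · intro hq
      obtain ⟨hq1, hq2⟩ := Finset.mem_sdiff.mp hq
      refine Finset.mem_sdiff.mpr ⟨Finset.mem_univ _, ?_⟩
      rw [Finset.mem_insert, not_or]
      exact ⟨by simpa using hq1, hq2⟩
  rcases lt_trichotomy (bval v (a x)) (w x) with hlt | heq | hgt
  · -- x strictly below
    have hfull : Rz a w v X (Y \ X) (univ \ Y) := by
      refine ⟨hvP, hvZ, fun q hq => ?_⟩
      obtain ⟨-, hq2⟩ := Finset.mem_sdiff.mp hq
      by_cases hqx : q = x
      · subst hqx; exact hlt
      · exact hvM q (Finset.mem_sdiff.mpr ⟨Finset.mem_compl.mpr (by simpa using hqx), hq2⟩)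
    by_cases hbig : k + 1 < Y.card
    · obtain ⟨g, hgP, hgZ, hgM⟩ := (H X Y hXY (by omega) hbig).mp ⟨v, hfull⟩
      exact ⟨g, hgP, hgZ, fun q hq => hgM q (Finset.sdiff_subset_sdiff (Finset.subset_univ _)
        (le_refl _) hq)⟩
    · have hYc : Y.card = k + 1 := by omega
      exact forward_hard a hspan k hk1 hk2 w w' H x X.card X Y rfl hXY hYx h1 hYc ⟨v, hfull⟩
  · -- x on the hyperplane
    have idZ2 : insert x Y \ X = insert x (Y \ X) := by
      ext q
      simp only [Finset.mem_sdiff, Finset.mem_insert]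
      constructor
      · rintro ⟨rfl | hq1, hq2⟩
        · exact Or.inl rfl
        · exact Or.inr ⟨hq1, hq2⟩
      · rintro (rfl | ⟨hq1, hq2⟩)
        · exact ⟨Or.inl rfl, hxX⟩
        · exact ⟨Or.inr hq1, hq2⟩
    have hreal : ∃ u : E d, Rz a w u X (insert x Y \ X) (univ \ insert x Y) := by
      refine ⟨v, hvP, ?_, ?_⟩
      · rw [idZ2]
        intro q hq
        rcases Finset.mem_insert.mp hq with rfl | hq'
        · exact heq
        · exact hvZ q hq'
      · rw [idM]; exact hvM
    have hsub : X ⊆ insert x Y := hXY.trans (Finset.subset_insert _ _)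
    have hcard : k + 1 < (insert x Y).card := by
      rw [Finset.card_insert_of_notMem hxY]; omega
    obtain ⟨g, hgP, hgZ, hgM⟩ := (H X (insert x Y) hsub (by omega) hcard).mp hreal
    rw [idZ2] at hgZ
    rw [idM] at hgM
    exact ⟨g, hgP, fun q hq => hgZ q (Finset.mem_insert_of_mem hq), hgM⟩
  · -- x strictly above
    have idZ : insert x Y \ insert x X = Y \ X := by
      ext q
      simp only [Finset.mem_sdiff, Finset.mem_insert, not_or]
      constructor
      · rintro ⟨hq1, hq2, hq3⟩
        rcases hq1 with rfl | hq1
        · exact absurd rfl hq2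
        · exact ⟨hq1, hq3⟩
      · rintro ⟨hq1, hq2⟩
        exact ⟨Or.inr hq1, fun he => hxY (he ▸ hq1), hq2⟩
    have hreal : ∃ u : E d, Rz a w u (insert x X) (insert x Y \ insert x X)
        (univ \ insert x Y) := by
      refine ⟨v, ?_, ?_, ?_⟩
      · intro q hq
        rcases Finset.mem_insert.mp hq with rfl | hq'
        · exact hgt
        · exact hvP q hq'
      · rw [idZ]; exact hvZ
      · rw [idM]; exact hvM
    have hsub : insert x X ⊆ insert x Y := Finset.insert_subset_insert _ hXY
    have hc1 : (insert x X).card < k + 1 := by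
      rw [Finset.card_insert_of_notMem hxX]; omega
    have hc2 : k + 1 < (insert x Y).card := by
      rw [Finset.card_insert_of_notMem hxY]; omega
    obtain ⟨g, hgP, hgZ, hgM⟩ := (H (insert x X) (insert x Y) hsub hc1 hc2).mp hreal
    rw [idZ] at hgZ
    rw [idM] at hgM
    exact ⟨g, fun q hq => hgP q (Finset.mem_insert_of_mem hq), hgZ, hgM⟩


lemma backward_one (a : Fin n → Fin d → ℝ)
    (hspan : affineSpan ℝ (Set.range a) = ⊤) (hn : d + 2 < n)
    (k : ℕ) (hk1 : 1 ≤ k) (hk2 : k ≤ d) (w w' : Fin n → ℝ)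
    (H : ∀ x : Fin n, ∀ X Y : Finset (Fin n), X ⊆ Y → Y ⊆ {x}ᶜ → X.card < k → k < Y.card →
        ((∃ v : E d, Rz a w v X (Y\X) ({x}ᶜ\Y)) ↔ (∃ v : E d, Rz a w' v X (Y\X) ({x}ᶜ\Y)))) :
    ∀ m : ℕ, ∀ X Y : Finset (Fin n), (univ \ (Y\X)).card = m → X ⊆ Y →
      X.card < k+1 → k+1 < Y.card →
      (∃ v : E d, Rz a w v X (Y\X) (univ\Y)) → (∃ v : E d, Rz a w' v X (Y\X) (univ\Y)) := by
  classical
  intro m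
  induction m using Nat.strong_induction_on with
  | _ m IH =>
  intro X Y hm hXY hXk hYk hreal
  obtain ⟨v, hvP, hvZ, hvM⟩ := hreal
  by_cases hU : ∃ h : E d, (∀ i ∈ Y \ X, bval h (a i) = 0) ∧ h ≠ 0
  · -- climb case
    obtain ⟨h0, hz00, hne0⟩ := hU
    set Kof : E d → Finset (Fin n) := fun h =>
      (X.filter (fun i => bval h (a i) < 0)) ∪
        ((univ \ Y).filter (fun i => 0 < bval h (a i))) with hKof
    have step : ∀ h : E d, (∀ i ∈ Y \ X, bval h (a i) = 0) → (Kof h).Nonempty →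
        ∃ u : E d, Rz a w' u X (Y\X) (univ\Y) := by
      intro h hz0 hKne
      have hKmem : ∀ i ∈ Kof h, (i ∈ X ∧ bval h (a i) < 0) ∨
          (i ∈ univ \ Y ∧ 0 < bval h (a i)) := by
        intro i hi
        rcases Finset.mem_union.mp hi with h' | h' <;>
          obtain ⟨h1, h2⟩ := Finset.mem_filter.mp h'
        · exact Or.inl ⟨h1, h2⟩
        · exact Or.inr ⟨h1, h2⟩
      have hPK : ∀ i ∈ X, i ∉ Kof h → 0 ≤ bval h (a i) := by
        intro i hi hiK
        by_contra hcon
        push_neg at hcon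
        exact hiK (Finset.mem_union_left _ (Finset.mem_filter.mpr ⟨hi, hcon⟩))
      have hMK : ∀ i ∈ univ \ Y, i ∉ Kof h → bval h (a i) ≤ 0 := by
        intro i hi hiK
        by_contra hcon
        push_neg at hcon
        exact hiK (Finset.mem_union_right _ (Finset.mem_filter.mpr ⟨hi, hcon⟩))
      obtain ⟨C, t, htp, hCK, hCne, hrz2⟩ :=
        cross ⟨hvP, hvZ, hvM⟩ hz0 hKmem hPK hMK hKne
      have hCneg : ∀ i ∈ C, i ∈ X → bval h (a i) < 0 := by
        intro i hi hiX
        rcases hKmem i (hCK hi) with ⟨_, hh⟩ | ⟨hiM, _⟩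
        · exact hh
        · exact absurd (hXY hiX) (Finset.mem_sdiff.mp hiM).2
      have hCpos : ∀ i ∈ C, i ∉ X → 0 < bval h (a i) := by
        intro i hi hiX
        rcases hKmem i (hCK hi) with ⟨hiX', _⟩ | ⟨_, hh⟩
        · exact absurd hiX' hiX
        · exact hh
      have hCnotY : ∀ i ∈ C, i ∉ X → i ∉ Y := by
        intro i hi hiX
        rcases hKmem i (hCK hi) with ⟨hiX', _⟩ | ⟨hiM, _⟩
        · exact absurd hiX' hiX
        · exact (Finset.mem_sdiff.mp hiM).2
      have hCZ : ∀ i ∈ C, i ∉ Y \ X := by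
        intro i hi hiZ
        obtain ⟨hiY, hiX⟩ := Finset.mem_sdiff.mp hiZ
        exact (hCnotY i hi hiX) hiY
      have hzneg : ∀ i ∈ Y \ X, bval (-h) (a i) = 0 := fun i hi => by
        rw [bval_neg, hz0 i hi, neg_zero]
      set X' := X \ C with hX'
      set Y' := Y ∪ C with hY'
      have idZ' : Y' \ X' = (Y \ X) ∪ C := by
        ext q
        simp only [hY', hX', Finset.mem_sdiff, Finset.mem_union, not_and, not_not]
        constructor
        · rintro ⟨hq1 | hq1, hq2⟩
          · by_cases hqC : q ∈ C
            · exact Or.inr hqC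
            · rcases Classical.em (q ∈ X) with hqX | hqX
              · exact Or.inr (hq2 hqX)
              · exact Or.inl ⟨hq1, hqX⟩
          · exact Or.inr hq1
        · rintro (⟨hq1, hq2⟩ | hq1)
          · exact ⟨Or.inl hq1, fun hqX => absurd hqX hq2⟩
          · exact ⟨Or.inr hq1, fun _ => hq1⟩
      have idM' : univ \ Y' = (univ \ Y) \ C := by
        ext q
        simp only [hY', Finset.mem_sdiff, Finset.mem_union, Finset.mem_univ, true_and, not_or]
        try tauto
      have hreal' : ∃ u : E d, Rz a w u X' (Y' \ X') (univ \ Y') := by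
        refine ⟨v + t • h, ?_⟩
        rw [idZ', idM']
        exact hrz2
      have hsub' : X' ⊆ Y' := fun q hq =>
        Finset.mem_union_left _ (hXY (Finset.mem_sdiff.mp hq).1)
      have hc1 : X'.card < k + 1 := by
        have := Finset.card_le_card (show X' ⊆ X from Finset.sdiff_subset)
        omega
      have hc2 : k + 1 < Y'.card := by
        have := Finset.card_le_card (show Y ⊆ Y' from Finset.subset_union_left)
        omega
      have hCsub2 : C ⊆ univ \ (Y \ X) := fun q hq =>
        Finset.mem_sdiff.mpr ⟨Finset.mem_univ _, hCZ q hq⟩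
      have hsplit : univ \ (Y' \ X') = (univ \ (Y \ X)) \ C := by
        rw [idZ']
        ext q
        simp only [Finset.mem_sdiff, Finset.mem_union, Finset.mem_univ, true_and, not_or]
        try tauto
      have hmlt : (univ \ (Y' \ X')).card < m := by
        rw [hsplit, Finset.card_sdiff_of_subset hCsub2]
        have h1 := Finset.Nonempty.card_pos hCne
        have h2 := Finset.card_le_card hCsub2
        omega
      obtain ⟨g, hgP, hgZ, hgM⟩ := IH _ hmlt X' Y' rfl hsub' hc1 hc2 hreal'
      rw [idZ'] at hgZ
      rw [idM'] at hgM
      obtain ⟨t', ht', hgP2, hgZ2, hgM2⟩ :=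
        pert (h := -h) hgP hgM
          (fun i hi => hgZ i (Finset.mem_union_left _ hi)) hzneg
          (Cp := C ∩ X)
          (fun i hi => by
            obtain ⟨hiC, hiX⟩ := Finset.mem_inter.mp hi
            refine ⟨hgZ i (Finset.mem_union_right _ hiC), ?_⟩
            rw [bval_neg]
            linarith [hCneg i hiC hiX])
          (Cm := C \ X)
          (fun i hi => by
            obtain ⟨hiC, hiX⟩ := Finset.mem_sdiff.mp hi
            refine ⟨hgZ i (Finset.mem_union_right _ hiC), ?_⟩
            rw [bval_neg]
            linarith [hCpos i hiC hiX])
      refine ⟨g + t' • (-h), ?_, hgZ2, ?_⟩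
      · intro q hq
        apply hgP2
        by_cases hqC : q ∈ C
        · exact Finset.mem_union_right _ (Finset.mem_inter.mpr ⟨hqC, hq⟩)
        · exact Finset.mem_union_left _ (Finset.mem_sdiff.mpr ⟨hq, hqC⟩)
      · intro q hq
        apply hgM2
        obtain ⟨-, hq2⟩ := Finset.mem_sdiff.mp hq
        by_cases hqC : q ∈ C
        · exact Finset.mem_union_right _
            (Finset.mem_sdiff.mpr ⟨hqC, fun hqX => hq2 (hXY hqX)⟩)
        · exact Finset.mem_union_left _
            (Finset.mem_sdiff.mpr ⟨Finset.mem_sdiff.mpr ⟨Finset.mem_univ _, hq2⟩, hqC⟩)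
    by_cases hK0 : (Kof h0).Nonempty
    · exact step h0 hz00 hK0
    · by_cases hK0' : (Kof (-h0)).Nonempty
      · exact step (-h0) (fun i hi => by rw [bval_neg, hz00 i hi, neg_zero]) hK0'
      · exfalso
        apply hne0
        apply vanish a hspan
        intro i
        have hnotmem : ∀ hh : E d, ¬(Kof hh).Nonempty → i ∉ Kof hh :=
          fun hh hne hmem => hne ⟨i, hmem⟩
        by_cases hiX : i ∈ X
        · have h1 : ¬ bval h0 (a i) < 0 := fun hc => (hnotmem h0 hK0)
            (Finset.mem_union_left _ (Finset.mem_filter.mpr ⟨hiX, hc⟩))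
          have h2 : ¬ bval (-h0) (a i) < 0 := fun hc => (hnotmem (-h0) hK0')
            (Finset.mem_union_left _ (Finset.mem_filter.mpr ⟨hiX, hc⟩))
          rw [bval_neg] at h2
          push_neg at h1 h2
          linarith
        · by_cases hiY : i ∈ Y
          · exact hz00 i (Finset.mem_sdiff.mpr ⟨hiY, hiX⟩)
          · have hiM : i ∈ univ \ Y := Finset.mem_sdiff.mpr ⟨Finset.mem_univ _, hiY⟩
            have h1 : ¬ 0 < bval h0 (a i) := fun hc => (hnotmem h0 hK0)
              (Finset.mem_union_right _ (Finset.mem_filter.mpr ⟨hiM, hc⟩))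
            have h2 : ¬ 0 < bval (-h0) (a i) := fun hc => (hnotmem (-h0) hK0')
              (Finset.mem_union_right _ (Finset.mem_filter.mpr ⟨hiM, hc⟩))
            rw [bval_neg] at h2
            push_neg at h1 h2
            linarith
  · -- terminal case : Y \ X spans
    push_neg at hU
    have hreg : Reg a (Y \ X) := fun u hu => by
      by_contra hne
      exact hne (hU u hu)
    have hcardZ : (Y \ X).card = Y.card - X.card := Finset.card_sdiff_of_subset hXY
    have hXle := Finset.card_le_card hXY
    have hYlen : Y.card ≤ n := by
      have := Finset.card_le_card (Finset.subset_univ Y)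
      rwa [Finset.card_univ, Fintype.card_fin] at this
    have hZlen : (Y \ X).card ≤ n := by
      have := Finset.card_le_card (Finset.subset_univ (Y \ X))
      rwa [Finset.card_univ, Fintype.card_fin] at this
    -- uniform deletion transfers
    have delX : ∀ y ∈ X, ∃ g : E d,
        (∀ q ∈ X.erase y, w' q < bval g (a q)) ∧
        (∀ q ∈ (Y \ X).erase y, bval g (a q) = w' q) ∧
        (∀ q ∈ (univ \ Y).erase y, bval g (a q) < w' q) := by
      intro y hy
      have hyY := hXY hy
      have hsub : X.erase y ⊆ Y.erase y := Finset.erase_subset_erase _ hXY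
      have hsubx : Y.erase y ⊆ {y}ᶜ := fun q hq =>
        Finset.mem_compl.mpr (Finset.notMem_singleton.mpr (Finset.mem_erase.mp hq).1)
      have hc1 : (X.erase y).card < k := by
        rw [Finset.card_erase_of_mem hy]
        have := Finset.card_pos.mpr ⟨y, hy⟩
        omega
      have hc2 : k < (Y.erase y).card := by
        rw [Finset.card_erase_of_mem hyY]
        omega
      have idZx : (Y.erase y) \ (X.erase y) = Y \ X := by
        ext q
        constructor
        · intro hq
          obtain ⟨hq1, hq2⟩ := Finset.mem_sdiff.mp hq
          obtain ⟨hq3, hq4⟩ := Finset.mem_erase.mp hq1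
          refine Finset.mem_sdiff.mpr ⟨hq4, fun hqX => ?_⟩
          exact hq2 (Finset.mem_erase.mpr ⟨hq3, hqX⟩)
        · intro hq
          obtain ⟨hq1, hq2⟩ := Finset.mem_sdiff.mp hq
          have hqy : q ≠ y := fun he => hq2 (he ▸ hy)
          exact Finset.mem_sdiff.mpr ⟨Finset.mem_erase.mpr ⟨hqy, hq1⟩,
            fun hc => hq2 (Finset.mem_of_mem_erase hc)⟩
      have idMx : {y}ᶜ \ (Y.erase y) = univ \ Y := by
        ext q
        constructor
        · intro hq
          obtain ⟨hq1, hq2⟩ := Finset.mem_sdiff.mp hq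
          have hqy : q ≠ y := Finset.notMem_singleton.mp (Finset.mem_compl.mp hq1)
          refine Finset.mem_sdiff.mpr ⟨Finset.mem_univ _, fun hqY => ?_⟩
          exact hq2 (Finset.mem_erase.mpr ⟨hqy, hqY⟩)
        · intro hq
          obtain ⟨-, hq2⟩ := Finset.mem_sdiff.mp hq
          have hqy : q ≠ y := fun he => hq2 (he ▸ hyY)
          exact Finset.mem_sdiff.mpr ⟨Finset.mem_compl.mpr (Finset.notMem_singleton.mpr hqy),
            fun hc => hq2 (Finset.mem_of_mem_erase hc)⟩
      have hrealx : ∃ u : E d, Rz a w u (X.erase y)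
          ((Y.erase y) \ (X.erase y)) ({y}ᶜ \ (Y.erase y)) := by
        refine ⟨v, fun q hq => hvP q (Finset.mem_of_mem_erase hq), ?_, ?_⟩
        · rw [idZx]; exact hvZ
        · rw [idMx]; exact hvM
      obtain ⟨g, hgP, hgZ, hgM⟩ := (H y _ _ hsub hsubx hc1 hc2).mp hrealx
      rw [idZx] at hgZ
      rw [idMx] at hgM
      exact ⟨g, hgP, fun q hq => hgZ q (Finset.mem_of_mem_erase hq),
        fun q hq => hgM q (Finset.mem_of_mem_erase hq)⟩
    have delM : X.card < k → ∀ y ∈ univ \ Y, ∃ g : E d,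
        (∀ q ∈ X.erase y, w' q < bval g (a q)) ∧
        (∀ q ∈ (Y \ X).erase y, bval g (a q) = w' q) ∧
        (∀ q ∈ (univ \ Y).erase y, bval g (a q) < w' q) := by
      intro hXk' y hy
      have hyY : y ∉ Y := (Finset.mem_sdiff.mp hy).2
      have hsubx : Y ⊆ {y}ᶜ := fun q hq =>
        Finset.mem_compl.mpr (Finset.notMem_singleton.mpr (fun he => hyY (he ▸ hq)))
      have idMy : {y}ᶜ \ Y = (univ \ Y).erase y := by
        ext q
        constructor
        · intro hq
          obtain ⟨hq1, hq2⟩ := Finset.mem_sdiff.mp hq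
          exact Finset.mem_erase.mpr ⟨Finset.notMem_singleton.mp (Finset.mem_compl.mp hq1),
            Finset.mem_sdiff.mpr ⟨Finset.mem_univ _, hq2⟩⟩
        · intro hq
          obtain ⟨hq1, hq2⟩ := Finset.mem_erase.mp hq
          exact Finset.mem_sdiff.mpr ⟨Finset.mem_compl.mpr (Finset.notMem_singleton.mpr hq1),
            (Finset.mem_sdiff.mp hq2).2⟩
      have hrealy : ∃ u : E d, Rz a w u X (Y \ X) ({y}ᶜ \ Y) := by
        refine ⟨v, hvP, hvZ, fun q hq => ?_⟩
        obtain ⟨-, hq2⟩ := Finset.mem_sdiff.mp hq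
        exact hvM q (Finset.mem_sdiff.mpr ⟨Finset.mem_univ _, hq2⟩)
      obtain ⟨g, hgP, hgZ, hgM⟩ := (H y X Y hXY hsubx hXk' (by omega)).mp hrealy
      rw [idMy] at hgM
      exact ⟨g, fun q hq => hgP q (Finset.mem_of_mem_erase hq),
        fun q hq => hgZ q (Finset.mem_of_mem_erase hq), hgM⟩
    have delZ : X.card < k → ∀ y ∈ Y \ X, ∃ g : E d,
        (∀ q ∈ X.erase y, w' q < bval g (a q)) ∧
        (∀ q ∈ (Y \ X).erase y, bval g (a q) = w' q) ∧
        (∀ q ∈ (univ \ Y).erase y, bval g (a q) < w' q) := by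
      intro hXk' y hy
      obtain ⟨hyY, hyX⟩ := Finset.mem_sdiff.mp hy
      have hsub : X ⊆ Y.erase y := fun q hq =>
        Finset.mem_erase.mpr ⟨fun he => hyX (he ▸ hq), hXY hq⟩
      have hsubx : Y.erase y ⊆ {y}ᶜ := fun q hq =>
        Finset.mem_compl.mpr (Finset.notMem_singleton.mpr (Finset.mem_erase.mp hq).1)
      have hc2 : k < (Y.erase y).card := by
        rw [Finset.card_erase_of_mem hyY]
        omega
      have idZz : (Y.erase y) \ X = (Y \ X).erase y := by
        ext q
        constructor
        · intro hq
          obtain ⟨hq1, hq2⟩ := Finset.mem_sdiff.mp hq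
          obtain ⟨hq3, hq4⟩ := Finset.mem_erase.mp hq1
          exact Finset.mem_erase.mpr ⟨hq3, Finset.mem_sdiff.mpr ⟨hq4, hq2⟩⟩
        · intro hq
          obtain ⟨hq1, hq2⟩ := Finset.mem_erase.mp hq
          obtain ⟨hq3, hq4⟩ := Finset.mem_sdiff.mp hq2
          exact Finset.mem_sdiff.mpr ⟨Finset.mem_erase.mpr ⟨hq1, hq3⟩, hq4⟩
      have idMz : {y}ᶜ \ (Y.erase y) = univ \ Y := by
        ext q
        constructor
        · intro hq
          obtain ⟨hq1, hq2⟩ := Finset.mem_sdiff.mp hq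
          have hqy : q ≠ y := Finset.notMem_singleton.mp (Finset.mem_compl.mp hq1)
          refine Finset.mem_sdiff.mpr ⟨Finset.mem_univ _, fun hqY => ?_⟩
          exact hq2 (Finset.mem_erase.mpr ⟨hqy, hqY⟩)
        · intro hq
          obtain ⟨-, hq2⟩ := Finset.mem_sdiff.mp hq
          have hqy : q ≠ y := fun he => hq2 (he ▸ hyY)
          exact Finset.mem_sdiff.mpr ⟨Finset.mem_compl.mpr (Finset.notMem_singleton.mpr hqy),
            fun hc => hq2 (Finset.mem_of_mem_erase hc)⟩
      have hrealz : ∃ u : E d, Rz a w u X ((Y.erase y) \ X) ({y}ᶜ \ (Y.erase y)) := by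
        refine ⟨v, hvP, ?_, ?_⟩
        · rw [idZz]
          exact fun q hq => hvZ q (Finset.mem_of_mem_erase hq)
        · rw [idMz]; exact hvM
      obtain ⟨g, hgP, hgZ, hgM⟩ := (H y X (Y.erase y) hsub hsubx hXk' hc2).mp hrealz
      rw [idZz] at hgZ
      rw [idMz] at hgM
      exact ⟨g, fun q hq => hgP q (Finset.mem_of_mem_erase hq), hgZ,
        fun q hq => hgM q (Finset.mem_of_mem_erase hq)⟩
    -- combining two deletions
    have pairdone : ∀ y y' : Fin n, y ≠ y' →
        (∃ g : E d,
          (∀ q ∈ X.erase y, w' q < bval g (a q)) ∧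
          (∀ q ∈ (Y \ X).erase y, bval g (a q) = w' q) ∧
          (∀ q ∈ (univ \ Y).erase y, bval g (a q) < w' q)) →
        (∃ g : E d,
          (∀ q ∈ X.erase y', w' q < bval g (a q)) ∧
          (∀ q ∈ (Y \ X).erase y', bval g (a q) = w' q) ∧
          (∀ q ∈ (univ \ Y).erase y', bval g (a q) < w' q)) →
        Reg a (((Y \ X).erase y).erase y') →
        ∃ u : E d, Rz a w' u X (Y \ X) (univ \ Y) := by
      intro y y' hyy hg hg' hreg2
      obtain ⟨g, hgP, hgZ, hgM⟩ := hg
      obtain ⟨g', hgP', hgZ', hgM'⟩ := hg'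
      have heq : g = g' := by
        apply reg_uniq hreg2
        intro q hq
        have hq1 := Finset.mem_erase.mp hq
        rw [hgZ q hq1.2]
        rw [hgZ' q (Finset.mem_erase.mpr ⟨hq1.1, (Finset.mem_erase.mp hq1.2).2⟩)]
      refine ⟨g, ?_, ?_, ?_⟩
      · intro q hq
        by_cases hqy : q = y
        · subst hqy
          rw [heq]
          exact hgP' q (Finset.mem_erase.mpr ⟨hyy, hq⟩)
        · exact hgP q (Finset.mem_erase.mpr ⟨hqy, hq⟩)
      · intro q hq
        by_cases hqy : q = y
        · subst hqy
          rw [heq]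
          exact hgZ' q (Finset.mem_erase.mpr ⟨hyy, hq⟩)
        · exact hgZ q (Finset.mem_erase.mpr ⟨hqy, hq⟩)
      · intro q hq
        by_cases hqy : q = y
        · subst hqy
          rw [heq]
          exact hgM' q (Finset.mem_erase.mpr ⟨hyy, hq⟩)
        · exact hgM q (Finset.mem_erase.mpr ⟨hqy, hq⟩)
    have hXZ : ∀ q ∈ X, q ∉ Y \ X := fun q hq hq' => (Finset.mem_sdiff.mp hq').2 hq
    have hMZ : ∀ q ∈ univ \ Y, q ∉ Y \ X := fun q hq hq' =>
      (Finset.mem_sdiff.mp hq).2 (Finset.mem_sdiff.mp hq').1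
    by_cases hX2 : 2 ≤ X.card
    · obtain ⟨y, hy, y', hy', hyy⟩ := Finset.one_lt_card.mp (by omega : 1 < X.card)
      apply pairdone y y' hyy (delX y hy) (delX y' hy')
      rw [Finset.erase_eq_of_notMem (fun hc => hXZ y' hy' (Finset.mem_of_mem_erase hc)),
        Finset.erase_eq_of_notMem (hXZ y hy)]
      exact hreg
    · by_cases hXk' : X.card < k
      · by_cases hO2 : 2 ≤ (X ∪ (univ \ Y)).card
        · obtain ⟨y, hy, y', hy', hyy⟩ :=
            Finset.one_lt_card.mp (by omega : 1 < (X ∪ (univ \ Y)).card)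
          have hnotZ : ∀ q ∈ X ∪ (univ \ Y), q ∉ Y \ X := by
            intro q hq
            rcases Finset.mem_union.mp hq with h' | h'
            · exact hXZ q h'
            · exact hMZ q h'
          have hdel : ∀ q ∈ X ∪ (univ \ Y), ∃ g : E d,
              (∀ r ∈ X.erase q, w' r < bval g (a r)) ∧
              (∀ r ∈ (Y \ X).erase q, bval g (a r) = w' r) ∧
              (∀ r ∈ (univ \ Y).erase q, bval g (a r) < w' r) := by
            intro q hq
            rcases Finset.mem_union.mp hq with h' | h'
            · exact delX q h'
            · exact delM hXk' q h'
          apply pairdone y y' hyy (hdel y hy) (hdel y' hy')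
          rw [Finset.erase_eq_of_notMem (fun hc => hnotZ y' hy' (Finset.mem_of_mem_erase hc)),
            Finset.erase_eq_of_notMem (hnotZ y hy)]
          exact hreg
        · have hOZ : X ∪ (univ \ Y) = univ \ (Y \ X) := by
            ext q
            constructor
            · intro hq
              refine Finset.mem_sdiff.mpr ⟨Finset.mem_univ _, ?_⟩
              rcases Finset.mem_union.mp hq with h' | h'
              · exact hXZ q h'
              · exact hMZ q h'
            · intro hq
              obtain ⟨-, hq2⟩ := Finset.mem_sdiff.mp hq
              by_cases hqY : q ∈ Y
              · refine Finset.mem_union_left _ ?_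
                by_contra hqX
                exact hq2 (Finset.mem_sdiff.mpr ⟨hqY, hqX⟩)
              · exact Finset.mem_union_right _ (Finset.mem_sdiff.mpr ⟨Finset.mem_univ _, hqY⟩)
          have hcardO : (X ∪ (univ \ Y)).card = n - (Y \ X).card := by
            rw [hOZ, Finset.card_sdiff_of_subset (Finset.subset_univ _), Finset.card_univ,
              Fintype.card_fin]
          have hZbig : d + 2 ≤ (Y \ X).card := by omega
          obtain ⟨y1, hy1Z, hreg1⟩ := reg_erase hreg hZbig
          by_cases hOne : (X ∪ (univ \ Y)).Nonempty
          · obtain ⟨y0, hy0⟩ := hOne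
            have hy01 : y0 ≠ y1 := fun he => by
              rcases Finset.mem_union.mp hy0 with h' | h'
              · exact hXZ y0 h' (he ▸ hy1Z)
              · exact hMZ y0 h' (he ▸ hy1Z)
            have hdel0 : ∃ g : E d,
                (∀ r ∈ X.erase y0, w' r < bval g (a r)) ∧
                (∀ r ∈ (Y \ X).erase y0, bval g (a r) = w' r) ∧
                (∀ r ∈ (univ \ Y).erase y0, bval g (a r) < w' r) := by
              rcases Finset.mem_union.mp hy0 with h' | h'
              · exact delX y0 h'
              · exact delM hXk' y0 h'
            apply pairdone y0 y1 hy01 hdel0 (delZ hXk' y1 hy1Z)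
            have hy0Z : y0 ∉ Y \ X := by
              rcases Finset.mem_union.mp hy0 with h' | h'
              · exact hXZ y0 h'
              · exact hMZ y0 h'
            rw [Finset.erase_eq_of_notMem hy0Z]
            exact hreg1
          · have hOcard0 : (X ∪ (univ \ Y)).card = 0 := by
              rw [Finset.card_eq_zero]
              exact Finset.not_nonempty_iff_eq_empty.mp hOne
            have hcard1 : d + 2 ≤ ((Y \ X).erase y1).card := by
              rw [Finset.card_erase_of_mem hy1Z]
              omega
            obtain ⟨y2, hy2, hreg2⟩ := reg_erase hreg1 hcard1
            have hy12 : y1 ≠ y2 := fun he => (Finset.mem_erase.mp hy2).1 he.symm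
            exact pairdone y1 y2 hy12 (delZ hXk' y1 hy1Z)
              (delZ hXk' y2 (Finset.mem_of_mem_erase hy2)) hreg2
      · -- kernel : X = {x₀} and k = 1
        have hk1' : k = 1 := by omega
        have hXcard1 : X.card = 1 := by omega
        obtain ⟨x₀, hX1⟩ := Finset.card_eq_one.mp hXcard1
        subst hX1
        have hx₀Y : x₀ ∈ Y := hXY (Finset.mem_singleton_self x₀)
        have hx₀Z : x₀ ∉ Y \ {x₀} := fun hc => (Finset.mem_sdiff.mp hc).2
          (Finset.mem_singleton_self x₀)
        have hx₀M : x₀ ∉ univ \ Y := fun hc => (Finset.mem_sdiff.mp hc).2 hx₀Y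
        obtain ⟨g, hgP0, hgZ0, hgM0⟩ := delX x₀ (Finset.mem_singleton_self x₀)
        have hgZ : ∀ q ∈ Y \ {x₀}, bval g (a q) = w' q := fun q hq =>
          hgZ0 q (Finset.mem_erase.mpr ⟨fun he => hx₀Z (he ▸ hq), hq⟩)
        have hgM : ∀ q ∈ univ \ Y, bval g (a q) < w' q := fun q hq =>
          hgM0 q (Finset.mem_erase.mpr ⟨fun he => hx₀M (he ▸ hq), hq⟩)
        have hZcard1 : (Y \ {x₀}).card = Y.card - 1 := by
          rw [Finset.card_sdiff_of_subset (Finset.singleton_subset_iff.mpr hx₀Y), Finset.card_singleton]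
        have hchoice : ∃ (x₁ : Fin n) (S : Finset (Fin n)), x₁ ≠ x₀ ∧ x₁ ∉ S ∧ x₀ ∉ S ∧
            S ⊆ Y \ {x₀} ∧ Reg a S ∧ 2 ≤ S.card ∧ (Y \ {x₀}) ⊆ S ∪ {x₁} := by
          by_cases hM : (univ \ Y).Nonempty
          · obtain ⟨x₁, hx₁⟩ := hM
            have hx₁Y : x₁ ∉ Y := (Finset.mem_sdiff.mp hx₁).2
            exact ⟨x₁, Y \ {x₀}, fun he => hx₁Y (he ▸ hx₀Y),
              fun hc => hx₁Y (Finset.mem_sdiff.mp hc).1,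
              hx₀Z, Finset.Subset.refl _, hreg, by omega, Finset.subset_union_left⟩
          · have hYuniv : univ ⊆ Y := by
              intro q hq
              by_contra hc
              exact hM ⟨q, Finset.mem_sdiff.mpr ⟨hq, hc⟩⟩
            have hYn : Y.card = n := by
              have h1 := Finset.card_le_card hYuniv
              rw [Finset.card_univ, Fintype.card_fin] at h1
              omega
            obtain ⟨x₁, hx₁Z, hreg1⟩ := reg_erase hreg (by omega)
            refine ⟨x₁, (Y \ {x₀}).erase x₁,
              fun he => (Finset.mem_sdiff.mp hx₁Z).2 (by rw [he]; exact Finset.mem_singleton_self x₀),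
              Finset.notMem_erase _ _, fun hc => hx₀Z (Finset.mem_of_mem_erase hc),
              Finset.erase_subset _ _, hreg1, ?_, ?_⟩
            · rw [Finset.card_erase_of_mem hx₁Z]
              omega
            · intro q hq
              by_cases hqx : q = x₁
              · exact Finset.mem_union_right _ (by rw [hqx]; exact Finset.mem_singleton_self x₁)
              · exact Finset.mem_union_left _ (Finset.mem_erase.mpr ⟨hqx, hq⟩)
        obtain ⟨x₁, S, hx₁0, hx₁S, hx₀S, hSZ, hregS, hS2, hZS⟩ := hchoice
        have hSx₁c : S ⊆ {x₁}ᶜ := fun q hq =>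
          Finset.mem_compl.mpr (Finset.notMem_singleton.mpr (fun he => hx₁S (he ▸ hq)))
        have hq_minus : ∀ q, q ≠ x₁ → q ∉ S → q ≠ x₀ → q ∈ univ \ Y := by
          intro q h1 h2 h3
          refine Finset.mem_sdiff.mpr ⟨Finset.mem_univ _, fun hqY => ?_⟩
          have hqZ : q ∈ Y \ {x₀} :=
            Finset.mem_sdiff.mpr ⟨hqY, Finset.notMem_singleton.mpr h3⟩
          rcases Finset.mem_union.mp (hZS hqZ) with h' | h'
          · exact h2 h'
          · exact h1 (Finset.mem_singleton.mp h')
        rcases lt_trichotomy (bval g (a x₀)) (w' x₀) with hlt | heqv | hgt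
        · exfalso
          have hreal' : ∃ u : E d, Rz a w' u ∅ (S \ ∅) ({x₁}ᶜ \ S) := by
            refine ⟨g, fun q hq => absurd hq (Finset.notMem_empty q), ?_, ?_⟩
            · rw [Finset.sdiff_empty]
              exact fun q hq => hgZ q (hSZ hq)
            · intro q hq
              obtain ⟨hq1, hq2⟩ := Finset.mem_sdiff.mp hq
              have hq1' : q ≠ x₁ := Finset.notMem_singleton.mp (Finset.mem_compl.mp hq1)
              by_cases hq0 : q = x₀
              · subst hq0; exact hlt
              · exact hgM q (hq_minus q hq1' hq2 hq0)
          obtain ⟨φ, -, hφZ, hφM⟩ := (H x₁ ∅ S (Finset.empty_subset _) hSx₁c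
            (by rw [Finset.card_empty]; omega) (by omega)).mpr hreal'
          rw [Finset.sdiff_empty] at hφZ
          have hφv : φ = v := by
            apply reg_uniq hregS
            intro q hq
            rw [hφZ q hq, hvZ q (hSZ hq)]
          have hx₀mem : x₀ ∈ {x₁}ᶜ \ S := Finset.mem_sdiff.mpr
            ⟨Finset.mem_compl.mpr (Finset.notMem_singleton.mpr (fun he => hx₁0 he.symm)),
              hx₀S⟩
          have h1 := hφM x₀ hx₀mem
          rw [hφv] at h1
          have h2 := hvP x₀ (Finset.mem_singleton_self x₀)
          linarith
        · exfalso
          have hsubY' : insert x₀ S ⊆ {x₁}ᶜ := by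
            intro q hq
            rcases Finset.mem_insert.mp hq with rfl | hq'
            · exact Finset.mem_compl.mpr
                (Finset.notMem_singleton.mpr (fun he => hx₁0 he.symm))
            · exact hSx₁c hq'
          have hc2' : k < (insert x₀ S).card := by
            rw [Finset.card_insert_of_notMem hx₀S]
            omega
          have hreal' : ∃ u : E d, Rz a w' u ∅ ((insert x₀ S) \ ∅)
              ({x₁}ᶜ \ (insert x₀ S)) := by
            refine ⟨g, fun q hq => absurd hq (Finset.notMem_empty q), ?_, ?_⟩
            · rw [Finset.sdiff_empty]
              intro q hq
              rcases Finset.mem_insert.mp hq with rfl | hq'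
              · exact heqv
              · exact hgZ q (hSZ hq')
            · intro q hq
              obtain ⟨hq1, hq2⟩ := Finset.mem_sdiff.mp hq
              rw [Finset.mem_insert, not_or] at hq2
              exact hgM q (hq_minus q
                (Finset.notMem_singleton.mp (Finset.mem_compl.mp hq1)) hq2.2 hq2.1)
          obtain ⟨φ, -, hφZ, -⟩ := (H x₁ ∅ (insert x₀ S) (Finset.empty_subset _) hsubY'
            (by rw [Finset.card_empty]; omega) hc2').mpr hreal'
          rw [Finset.sdiff_empty] at hφZ
          have hφv : φ = v := by
            apply reg_uniq hregS
            intro q hq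
            rw [hφZ q (Finset.mem_insert_of_mem hq), hvZ q (hSZ hq)]
          have h1 := hφZ x₀ (Finset.mem_insert_self x₀ S)
          rw [hφv] at h1
          have h2 := hvP x₀ (Finset.mem_singleton_self x₀)
          linarith
        · exact ⟨g, fun q hq => by rw [Finset.mem_singleton.mp hq]; exact hgt, hgZ, hgM⟩


end

end HypAux

theorem hypersecondary_eq_sum_of_deletions {n d : ℕ} (a : Fin n → (Fin d → ℝ))
    (hspan : affineSpan ℝ (Set.range a) = ⊤)
    (hn : d + 2 < n)
    (k : ℕ) (hk1 : 1 ≤ k) (hk2 : k ≤ d)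
    (w w' : Fin n → ℝ) :
    SameHyp a w w' (k + 1) ↔
      ∀ x : Fin n, SameHypOn a w w' {x}ᶜ k := by
  classical
  open HypAux in
  constructor
  · intro Hs x X Y hXY hYx h1 h2
    have H : ∀ X Y : Finset (Fin n), X ⊆ Y → X.card < k+1 → k+1 < Y.card →
        ((∃ v : E d, Rz a w v X (Y\X) (Finset.univ\Y)) ↔
          (∃ v : E d, Rz a w' v X (Y\X) (Finset.univ\Y))) := by
      intro X' Y' hs hc1 hc2
      have := Hs X' Y' hs (Finset.subset_univ _) hc1 hc2
      rwa [isWTileOn_iff, isWTileOn_iff] at this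
    have H' : ∀ X Y : Finset (Fin n), X ⊆ Y → X.card < k+1 → k+1 < Y.card →
        ((∃ v : E d, Rz a w' v X (Y\X) (Finset.univ\Y)) ↔
          (∃ v : E d, Rz a w v X (Y\X) (Finset.univ\Y))) :=
      fun X' Y' hs hc1 hc2 => (H X' Y' hs hc1 hc2).symm
    rw [isWTileOn_iff, isWTileOn_iff]
    exact ⟨forward_one a hspan k hk1 hk2 w w' H x X Y hXY hYx h1 h2,
      forward_one a hspan k hk1 hk2 w' w H' x X Y hXY hYx h1 h2⟩
  · intro Hd X Y hXY _ h1 h2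
    have H : ∀ x : Fin n, ∀ X Y : Finset (Fin n), X ⊆ Y → Y ⊆ {x}ᶜ → X.card < k →
        k < Y.card →
        ((∃ v : E d, Rz a w v X (Y\X) ({x}ᶜ\Y)) ↔
          (∃ v : E d, Rz a w' v X (Y\X) ({x}ᶜ\Y))) := by
      intro x X' Y' hs hsx hc1 hc2
      have := Hd x X' Y' hs hsx hc1 hc2
      rwa [isWTileOn_iff, isWTileOn_iff] at this
    have H' : ∀ x : Fin n, ∀ X Y : Finset (Fin n), X ⊆ Y → Y ⊆ {x}ᶜ → X.card < k →
        k < Y.card →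
        ((∃ v : E d, Rz a w' v X (Y\X) ({x}ᶜ\Y)) ↔
          (∃ v : E d, Rz a w v X (Y\X) ({x}ᶜ\Y))) :=
      fun x X' Y' hs hsx hc1 hc2 => (H x X' Y' hs hsx hc1 hc2).symm
    rw [isWTileOn_iff, isWTileOn_iff]
    exact ⟨backward_one a hspan hn k hk1 hk2 w w' H _ X Y rfl hXY h1 h2,
      backward_one a hspan hn k hk1 hk2 w' w H' _ X Y rfl hXY h1 h2⟩
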